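/- Let m ≥ 1 and let (Γ, τ) be a translation quiver such that for any arrow x → y in Γ, x is projective whenever y is projective. Then the translation quiver (Γ^m, τ^m) has the same property: whenever there is a sectional path of length m from x to y in Γ and τ^m(x) is defined, τ^m(y) is also defined (equivalently, if y is projective in Γ^m then x is projective in Γ^m). -/
import Mathlib


/-- A quiver (given by its arrow types `A x y`) is locally finite if each
vertex has only finitely many arrows between any pair of vertices and only
finitely many neighbours. -/
def QuiverLocFin {V : Type*} (A : V → V → Type*) : Prop :=
  (∀ x y, Finite (A x y)) ∧ (∀ x, {y | Nonempty (A x y)}.Finite) ∧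
    (∀ y, {x | Nonempty (A x y)}.Finite)

/-- The partially defined translation `τ : V → Option V` is injective on its
domain. -/
def TauInjective {V : Type*} (τ : V → Option V) : Prop :=
  ∀ x y z, τ x = some z → τ y = some z → x = y

/-- A translation quiver: a locally finite quiver together with an injective
partially defined translation `τ` such that for every vertex `x` and every
vertex `y` in the domain of `τ`, the number of arrows from `x` to `y` equals
the number of arrows from `τ(y)` to `x`.  The projective vertices are those
outside the domain of `τ` (i.e. those with `τ y = none`). -/
def IsTranslationQuiver {V : Type*} (A : V → V → Type*) (τ : V → Option V) : Prop :=
  QuiverLocFin A ∧ TauInjective τ ∧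
    ∀ x y z, τ y = some z → Nat.card (A x y) = Nat.card (A z x)

/-- The `k`-th iterate of the partially defined map `τ`. -/
def iterTau {V : Type*} (τ : V → Option V) : ℕ → V → Option V
  | 0, x => some x
  | k+1, x => (τ x).bind (iterTau τ k)

/-- The sectional condition on a sequence of vertices `v 0, v 1, …, v m`:
`τ (v (s+1)) ≠ v (s-1)` for all `0 < s < m` for which `τ (v (s+1))` is
defined. -/
def SectCond {V : Type*} (τ : V → Option V) (m : ℕ) (v : Fin (m+1) → V) : Prop :=
  ∀ (s : ℕ) (_ : 1 ≤ s) (h2 : s + 1 ≤ m),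
    τ (v ⟨s+1, by omega⟩) ≠ some (v ⟨s-1, by omega⟩)

/-- `v 0, v 1, …, v m` is (the sequence of vertices of) a sectional path:
there is an arrow `v s → v (s+1)` for each `s`, and the sectional condition
holds. -/
def IsSectionalPath {V : Type*} (A : V → V → Type*) (τ : V → Option V) (m : ℕ)
    (v : Fin (m+1) → V) : Prop :=
  (∀ s : Fin m, Nonempty (A (v s.castSucc) (v s.succ))) ∧ SectCond τ m v

/-- The type of sectional paths of length `m` from `x` to `y`: a sequence of
vertices `v 0 = x, v 1, …, v m = y` satisfying the sectional condition,
together with a chosen arrow `v s → v (s+1)` for each `s`. -/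
def SectPath {V : Type*} (A : V → V → Type*) (τ : V → Option V) (m : ℕ)
    (x y : V) : Type _ :=
  Σ v : {v : Fin (m+1) → V // v 0 = x ∧ v (Fin.last m) = y ∧ SectCond τ m v},
    ∀ s : Fin m, A (v.1 s.castSucc) (v.1 s.succ)

/-- Let `m ≥ 1` and let `(Γ,τ)` be a translation quiver such that for any
arrow `x → y`, `x` is projective whenever `y` is projective.  Then
`(Γ^m, τ^m)` has the same property: whenever there is a sectional path of
length `m` from `x` to `y` in `Γ` (an arrow of `Γ^m`) and `τ^m x` is defined,
`τ^m y` is also defined (equivalently, if `y` is projective in `Γ^m` then `x`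
is projective in `Γ^m`). -/
theorem stmt11 {V : Type*} (A : V → V → Type*) (τ : V → Option V)
    (hTQ : IsTranslationQuiver A τ)
    (hproj : ∀ x y, Nonempty (A x y) → τ y = none → τ x = none)
    (m : ℕ) (hm : 1 ≤ m) :
    ∀ v : Fin (m+1) → V, IsSectionalPath A τ m v →
      (∃ z, iterTau τ m (v 0) = some z) →
      ∃ z, iterTau τ m (v (Fin.last m)) = some z := by
  obtain ⟨⟨hfin, -, -⟩, -, htr⟩ := hTQ
  have L2 : ∀ x y z, Nonempty (A x y) → τ y = some z → Nonempty (A z x) := by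
    intro x y z hxy hz
    have hc := htr x y z hz
    have hpos : 0 < Nat.card (A z x) := by
      rw [← hc]
      have := hfin x y
      exact Nat.card_pos
    exact (Nat.card_pos_iff.mp hpos).1
  have L1 : ∀ x y, Nonempty (A x y) → ∀ z, τ x = some z → ∃ w, τ y = some w := by
    intro x y hxy z hz
    cases h : τ y with
    | none => simp [hproj x y hxy h] at hz
    | some w => exact ⟨w, rfl⟩
  have key : ∀ k x y, Nonempty (A x y) → (∃ z, iterTau τ k x = some z) →
      ∃ z, iterTau τ k y = some z := by
    intro k
    induction k with
    | zero => intro x y _ _; exact ⟨y, rfl⟩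
    | succ k ih =>
      rintro x y hxy ⟨z, hz⟩
      simp only [iterTau] at hz
      cases hx : τ x with
      | none => simp [hx] at hz
      | some x' =>
        rw [hx, Option.bind_some] at hz
        obtain ⟨y', hy'⟩ := L1 x y hxy x' hx
        have h1 : Nonempty (A y' x) := L2 x y y' hxy hy'
        have h2 : Nonempty (A x' y') := L2 y' x x' h1 hx
        obtain ⟨w, hw⟩ := ih x' y' h2 ⟨z, hz⟩
        exact ⟨w, by simp [iterTau, hy', hw]⟩
  intro v hv hx
  have main : ∀ s : ℕ, (h : s ≤ m) → ∃ z, iterTau τ m (v ⟨s, by omega⟩) = some z := by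
    intro s
    induction s with
    | zero => intro _; exact hx
    | succ s ih =>
      intro h
      exact key m _ _ (hv.1 ⟨s, by omega⟩) (ih (by omega))
  exact main m le_rfl
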